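/- arXiv:2604.11100 — 14 statements merged into one kernel-verified Lean document; each statement's English description precedes it below -/
import Mathlib

section
/- For every s ≥ 0 there exists a unique μ > 0 satisfying the fixed-point equation μ = exp(((α/α̃ − 1)²·s²/(α·σ²·μ + s)² − 1)·ν²·T/(2·σ²)). (Existence and uniqueness of the integral parameter in equation (8), with s playing the role of η − u(q(η)).) -/
/-- Existence and uniqueness of the integral parameter in equation (8). -/
theorem exists_unique_integral_parameter
    (ν σ T αl α : ℝ) (hν : 0 < ν) (hσ : 0 < σ) (hT : 0 < T)
    (hαl : 0 < αl) (hα : 0 < α) (s : ℝ) (hs : 0 ≤ s) :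
    ∃! μ : ℝ, 0 < μ ∧
      μ = Real.exp (((α / αl - 1) ^ 2 * s ^ 2 / (α * σ ^ 2 * μ + s) ^ 2 - 1)
        * ν ^ 2 * T / (2 * σ ^ 2)) := by
  rcases eq_or_lt_of_le hs with hs0 | hs0
  · -- case s = 0
    subst hs0
    refine ⟨Real.exp ((0 - 1) * ν ^ 2 * T / (2 * σ ^ 2)),
      ⟨Real.exp_pos _, by norm_num⟩, ?_⟩
    rintro μ ⟨hμ, hfix⟩
    rw [hfix]
    norm_num
  · -- case s > 0
    set F : ℝ → ℝ := fun μ => Real.exp (((α / αl - 1) ^ 2 * s ^ 2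
        / (α * σ ^ 2 * μ + s) ^ 2 - 1) * ν ^ 2 * T / (2 * σ ^ 2)) with hF
    have hσ2 : (0:ℝ) < σ ^ 2 := by positivity
    have hden : ∀ x : ℝ, 0 ≤ x → 0 < α * σ ^ 2 * x + s := by
      intro x hx
      have : 0 ≤ α * σ ^ 2 * x := by positivity
      linarith
    have hmono : ∀ x y : ℝ, 0 ≤ x → x ≤ y → F y ≤ F x := by
      intro x y hx hxy
      have hy : (0:ℝ) ≤ y := le_trans hx hxy
      have hdx := hden x hx
      have hdy := hden y hy
      simp only [hF]
      apply Real.exp_le_exp.mpr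
      have h3 : (α / αl - 1) ^ 2 * s ^ 2 / (α * σ ^ 2 * y + s) ^ 2
          ≤ (α / αl - 1) ^ 2 * s ^ 2 / (α * σ ^ 2 * x + s) ^ 2 := by
        gcongr
      rw [div_le_div_iff_of_pos_right (by positivity : (0:ℝ) < 2 * σ ^ 2)]
      have := mul_le_mul_of_nonneg_right
        (mul_le_mul_of_nonneg_right (sub_le_sub_right h3 1) (sq_nonneg ν)) hT.le
      linarith
    have hcont : ∀ M : ℝ, ContinuousOn F (Set.Icc 0 M) := by
      intro M
      rw [hF]
      apply Real.continuous_exp.comp_continuousOn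
      apply ContinuousOn.div _ continuousOn_const (fun x _ => by positivity)
      apply ContinuousOn.mul _ continuousOn_const
      apply ContinuousOn.mul _ continuousOn_const
      apply ContinuousOn.sub _ continuousOn_const
      apply ContinuousOn.div continuousOn_const (by fun_prop)
      intro x hx
      have := hden x hx.1
      positivity
    set M : ℝ := F 0 with hM
    have hM0 : 0 < M := Real.exp_pos _
    have hG : ContinuousOn (fun μ => F μ - μ) (Set.Icc 0 M) :=
      (hcont M).sub continuousOn_id
    have hGM : F M - M ≤ 0 := by
      have := hmono 0 M le_rfl hM0.le
      rw [← hM] at this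
      linarith
    have hsub := intermediate_value_Icc' hM0.le hG
    have hmem : (0:ℝ) ∈ Set.Icc (F M - M) (F 0 - 0) := by
      constructor
      · exact hGM
      · rw [← hM]; linarith
    obtain ⟨μ, hμmem, hμeq⟩ := hsub hmem
    have hfix : μ = F μ := by
      have : F μ - μ = 0 := hμeq
      linarith
    have hμpos : 0 < μ := by
      rw [hfix, hF]; exact Real.exp_pos _
    refine ⟨μ, ⟨hμpos, hfix⟩, ?_⟩
    rintro y ⟨hypos, hyfix⟩
    have hyF : y = F y := hyfix
    rcases le_total y μ with h | h
    · refine le_antisymm h ?_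
      calc μ = F μ := hfix
        _ ≤ F y := hmono y μ hypos.le h
        _ = y := hyF.symm
    · refine le_antisymm ?_ h
      calc y = F y := hyF
        _ ≤ F μ := hmono μ y hμpos.le h
        _ = μ := hfix.symm
end

section
/- (Implicit differentiation formula, equation (24).) Let η > 0, let u₀ ∈ [0, η), and let μ : ℝ → ℝ be differentiable at u₀, with μ(u) > 0 and μ(u) = exp(((α/α̃ − 1)²·(η − u)²/(α·σ²·μ(u) + η − u)² − 1)·ν²·T/(2·σ²)) for all u in some neighborhood of u₀. Then the derivative of μ at u₀ equals −A/(1 + B), where A = (α/α̃ − 1)²·μ(u₀)·(2·α·σ²·μ(u₀)·(η − u₀)/(α·σ²·μ(u₀) + η − u₀)³)·(ν²·T/(2·σ²)) and B = (α/α̃ − 1)²·μ(u₀)·(2·α·σ²·(η − u₀)²/(α·σ²·μ(u₀) + η − u₀)³)·(ν²·T/(2·σ²)). -/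
/-- Implicit differentiation formula, equation (24). -/
theorem integral_parameter_deriv
    (ν σ T αl α : ℝ) (hν : 0 < ν) (hσ : 0 < σ) (hT : 0 < T)
    (hαl : 0 < αl) (hα : 0 < α)
    (η u₀ : ℝ) (hη : 0 < η) (hu₀ : 0 ≤ u₀) (hu₀η : u₀ < η)
    (μ : ℝ → ℝ) (hdiff : DifferentiableAt ℝ μ u₀)
    (hfix : ∀ᶠ u in nhds u₀, 0 < μ u ∧
      μ u = Real.exp (((α / αl - 1) ^ 2 * (η - u) ^ 2
        / (α * σ ^ 2 * μ u + (η - u)) ^ 2 - 1) * ν ^ 2 * T / (2 * σ ^ 2))) :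
    deriv μ u₀ =
      -((α / αl - 1) ^ 2 * μ u₀ *
          (2 * α * σ ^ 2 * μ u₀ * (η - u₀) / (α * σ ^ 2 * μ u₀ + (η - u₀)) ^ 3)
          * (ν ^ 2 * T / (2 * σ ^ 2))) /
        (1 + (α / αl - 1) ^ 2 * μ u₀ *
          (2 * α * σ ^ 2 * (η - u₀) ^ 2 / (α * σ ^ 2 * μ u₀ + (η - u₀)) ^ 3)
          * (ν ^ 2 * T / (2 * σ ^ 2))) := by
  have hself := hfix.self_of_nhds
  have hm0 : 0 < μ u₀ := hself.1
  have hs : 0 < η - u₀ := by linarith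
  have hD : 0 < α * σ ^ 2 * μ u₀ + (η - u₀) := by positivity
  have hD2 : (α * σ ^ 2 * μ u₀ + (η - u₀)) ^ 2 ≠ 0 := by positivity
  set d := deriv μ u₀ with hdd
  have hμd : HasDerivAt μ d u₀ := hdiff.hasDerivAt
  have h1 : HasDerivAt (fun u => η - u) (-1) u₀ := by
    simpa using (hasDerivAt_id u₀).const_sub η
  have hN : HasDerivAt (fun u => (α / αl - 1) ^ 2 * (η - u) ^ 2)
      ((α / αl - 1) ^ 2 * (2 * (η - u₀) ^ 1 * (-1))) u₀ :=
    (h1.pow 2).const_mul _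
  have hDen : HasDerivAt (fun u => α * σ ^ 2 * μ u + (η - u))
      (α * σ ^ 2 * d + (-1)) u₀ :=
    (hμd.const_mul (α * σ ^ 2)).add h1
  have hDen2 : HasDerivAt (fun u => (α * σ ^ 2 * μ u + (η - u)) ^ 2)
      (2 * (α * σ ^ 2 * μ u₀ + (η - u₀)) ^ 1 * (α * σ ^ 2 * d + (-1))) u₀ :=
    hDen.pow 2
  have hQ := hN.div hDen2 hD2
  have hh := ((hQ.sub_const 1).mul_const (ν ^ 2)).mul_const T |>.div_const (2 * σ ^ 2)
  have hexp := hh.exp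
  have heq : μ =ᶠ[nhds u₀] (fun u => Real.exp (((α / αl - 1) ^ 2 * (η - u) ^ 2
      / (α * σ ^ 2 * μ u + (η - u)) ^ 2 - 1) * ν ^ 2 * T / (2 * σ ^ 2))) :=
    hfix.mono fun u hu => hu.2
  have hμ' := hexp.congr_of_eventuallyEq heq
  have hkey := hμ'.deriv
  simp only [Pi.div_apply] at hkey
  rw [← hdd, ← hself.2] at hkey
  have hσ2 : (2 : ℝ) * σ ^ 2 ≠ 0 := by positivity
  have hDne : α * σ ^ 2 * μ u₀ + (η - u₀) ≠ 0 := ne_of_gt hD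
  have hBpos : 0 < 1 + (α / αl - 1) ^ 2 * μ u₀ *
      (2 * α * σ ^ 2 * (η - u₀) ^ 2 / (α * σ ^ 2 * μ u₀ + (η - u₀)) ^ 3)
      * (ν ^ 2 * T / (2 * σ ^ 2)) := by positivity
  rw [eq_div_iff (ne_of_gt hBpos)]
  field_simp at hkey ⊢
  have hkey2 : d * (αl ^ 2 * αl ^ 2 * (α * σ ^ 2 * μ u₀ + (η - u₀)) ^ 3 * (2 * σ ^ 2)) =
      μ u₀ * ((-((α - αl) ^ 2 * (2 * (η - u₀)) * (α * σ ^ 2 * μ u₀ + (η - u₀)) * αl ^ 2) -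
        αl ^ 2 * ((α - αl) ^ 2 * (η - u₀) ^ 2 * (2 * (α * σ ^ 2 * d + -1)))) * ν ^ 2 * T) := by
    apply mul_right_cancel₀ hDne
    linear_combination (2 * αl ^ 2 * (α * σ ^ 2 * μ u₀ + (η - u₀))) * hkey
  have hαl2 : (αl : ℝ) ^ 2 ≠ 0 := by positivity
  refine mul_right_cancel₀ hαl2 ?_
  apply mul_right_cancel₀ (pow_ne_zero 2 hσ.ne')
  linear_combination αl ^ 2 * hkey
end

section
/- Let η > 0, let u₀ ∈ [0, η), and let μ : ℝ → ℝ be differentiable at u₀, with μ(u) > 0 and μ(u) = exp(((α/α̃ − 1)²·(η − u)²/(α·σ²·μ(u) + η − u)² − 1)·ν²·T/(2·σ²)) for all u in some neighborhood of u₀. If α ≠ α̃, then the derivative of μ at u₀ is strictly negative; that is, the integral parameter is strictly decreasing in the policy utility. -/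
set_option maxHeartbeats 1000000 in
/-- The integral parameter is strictly decreasing in the policy utility. -/
theorem integral_parameter_deriv_neg
    (ν σ T αl α : ℝ) (hν : 0 < ν) (hσ : 0 < σ) (hT : 0 < T)
    (hαl : 0 < αl) (hα : 0 < α)
    (η u₀ : ℝ) (hη : 0 < η) (hu₀ : 0 ≤ u₀) (hu₀η : u₀ < η)
    (μ : ℝ → ℝ) (hdiff : DifferentiableAt ℝ μ u₀)
    (hfix : ∀ᶠ u in nhds u₀, 0 < μ u ∧
      μ u = Real.exp (((α / αl - 1) ^ 2 * (η - u) ^ 2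
        / (α * σ ^ 2 * μ u + (η - u)) ^ 2 - 1) * ν ^ 2 * T / (2 * σ ^ 2)))
    (hne : α ≠ αl) :
    deriv μ u₀ < 0 := by
  obtain ⟨hm, heq⟩ := hfix.self_of_nhds
  have hs : (0:ℝ) < η - u₀ := by linarith
  have hD : 0 < α * σ ^ 2 * μ u₀ + (η - u₀) := by positivity
  have hc2 : 0 < (α / αl - 1) ^ 2 := by
    have h1 : α / αl ≠ 1 := by
      intro h
      exact hne (by field_simp at h; linarith)
    have h2 := sub_ne_zero.mpr h1
    positivity
  have hμd := hdiff.hasDerivAt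
  have h1 : HasDerivAt (fun u : ℝ => η - u) (-1) u₀ := by
    simpa using (hasDerivAt_id u₀).const_sub η
  have h2 := h1.pow 2
  have hN := h2.const_mul ((α / αl - 1) ^ 2)
  have h3 := (hμd.const_mul (α * σ ^ 2)).add h1
  have h4 := h3.pow 2
  have hDne : ((α * σ ^ 2 * μ u₀ + (η - u₀)) ^ 2) ≠ 0 := by positivity
  have hq := hN.div h4 hDne
  have hinner := (((hq.sub_const 1).mul_const (ν ^ 2)).mul_const T).div_const (2 * σ ^ 2)
  have hg := hinner.exp
  have hμ2 := hg.congr_of_eventuallyEq (hfix.mono fun u h => h.2)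
  have hkey := hμ2.deriv
  simp only [Pi.div_apply, Pi.pow_apply, Pi.add_apply] at hkey
  rw [← heq] at hkey
  push_cast at hkey
  field_simp at hkey
  by_contra hcon
  push_neg at hcon
  have hsub : α - αl ≠ 0 := sub_ne_zero.mpr hne
  have hMx : 0 < μ u₀ + (η - u₀) * deriv μ u₀ := by nlinarith
  have hkey2 : deriv μ u₀ * (αl ^ 2 * αl ^ 2 * ((α * σ ^ 2 * μ u₀ + (η - u₀)) ^ 2) ^ 2 * (2 * σ ^ 2))
      = -((2 * (α - αl) ^ 2 * αl ^ 2 * ν ^ 2 * T * (α * σ ^ 2) * (η - u₀) * μ u₀ *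
          (α * σ ^ 2 * μ u₀ + (η - u₀))) * (μ u₀ + (η - u₀) * deriv μ u₀)) := by
    linear_combination (2 * αl ^ 2 * (α * σ ^ 2 * μ u₀ + (η - u₀))) * hkey
  have hP : 0 < αl ^ 2 * αl ^ 2 * ((α * σ ^ 2 * μ u₀ + (η - u₀)) ^ 2) ^ 2 * (2 * σ ^ 2) := by
    positivity
  have hQ : 0 < (2 * (α - αl) ^ 2 * αl ^ 2 * ν ^ 2 * T * (α * σ ^ 2) * (η - u₀) * μ u₀ *
      (α * σ ^ 2 * μ u₀ + (η - u₀))) * (μ u₀ + (η - u₀) * deriv μ u₀) :=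
    mul_pos (by positivity) hMx
  nlinarith [mul_nonneg hcon hP.le]
end

section
/- For every s > 0 there exists a unique z > 0 satisfying s·z = exp(((α/α̃ − 1)²/(α·σ²·z + 1)² − 1)·ν²·T/(2·σ²)). (Existence and uniqueness of the rescaled integral parameter z(s) = μ(s)/s.) -/
/-- Existence and uniqueness of the rescaled integral parameter z(s) = μ(s)/s. -/
theorem exists_unique_rescaled_parameter
    (ν σ T αl α : ℝ) (hν : 0 < ν) (hσ : 0 < σ) (hT : 0 < T)
    (hαl : 0 < αl) (hα : 0 < α) (s : ℝ) (hs : 0 < s) :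
    ∃! z : ℝ, 0 < z ∧
      s * z = Real.exp (((α / αl - 1) ^ 2 / (α * σ ^ 2 * z + 1) ^ 2 - 1)
        * ν ^ 2 * T / (2 * σ ^ 2)) := by
  set c : ℝ := (α / αl - 1) ^ 2 with hc
  set g : ℝ → ℝ := fun z => (c / (α * σ ^ 2 * z + 1) ^ 2 - 1) * ν ^ 2 * T / (2 * σ ^ 2)
    with hg
  set F : ℝ → ℝ := fun z => s * z - Real.exp (g z) with hF
  have hcnn : 0 ≤ c := sq_nonneg _
  have hden : ∀ z : ℝ, 0 ≤ z → (0:ℝ) < α * σ ^ 2 * z + 1 := by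
    intro z hz
    have : 0 ≤ α * σ ^ 2 * z := by positivity
    linarith
  have hganti : ∀ x y : ℝ, 0 ≤ x → x ≤ y → g y ≤ g x := by
    intro x y hx hxy
    have hdx := hden x hx
    have hdy := hden y (le_trans hx hxy)
    have h1 : c / (α * σ ^ 2 * y + 1) ^ 2 ≤ c / (α * σ ^ 2 * x + 1) ^ 2 := by
      gcongr
    have h2 : (0:ℝ) < 2 * σ ^ 2 := by positivity
    have h3 : 0 ≤ ν ^ 2 * T := by positivity
    simp only [hg]
    rw [div_le_div_iff₀ h2 h2]
    nlinarith [mul_nonneg (sub_nonneg.2 h1) (by positivity : (0:ℝ) ≤ ν ^ 2 * T * (2 * σ ^ 2))]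
  have hmono : StrictMonoOn F (Set.Ici (0:ℝ)) := by
    intro x hx y hy hxy
    have h1 : s * x < s * y := (mul_lt_mul_iff_right₀ hs).2 hxy
    have h2 : Real.exp (g y) ≤ Real.exp (g x) :=
      Real.exp_le_exp.2 (hganti x y hx hxy.le)
    simp only [hF]
    linarith
  have hcont : ContinuousOn F (Set.Ici (0:ℝ)) := by
    apply ContinuousOn.sub (by fun_prop)
    apply Real.continuous_exp.comp_continuousOn
    apply ContinuousOn.div_const
    apply ContinuousOn.mul (ContinuousOn.mul _ continuousOn_const) continuousOn_const
    apply ContinuousOn.sub _ continuousOn_const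
    apply ContinuousOn.div continuousOn_const (by fun_prop)
    intro z hz
    exact pow_ne_zero 2 (ne_of_gt (hden z hz))
  set M : ℝ := (Real.exp (g 0) + 1) / s with hM
  have hM0 : 0 < M := by positivity
  have hFM : 0 < F M := by
    have h1 : Real.exp (g M) ≤ Real.exp (g 0) :=
      Real.exp_le_exp.2 (hganti 0 M le_rfl hM0.le)
    have h2 : s * M = Real.exp (g 0) + 1 := by
      rw [hM]
      field_simp
    simp only [hF]
    linarith
  have hF0 : F 0 < 0 := by
    simp only [hF]
    have := Real.exp_pos (g 0)
    linarith
  have hiv := intermediate_value_Icc hM0.le (hcont.mono (by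
    intro x hx; exact hx.1))
  have h0mem : (0:ℝ) ∈ Set.Icc (F 0) (F M) := ⟨hF0.le, hFM.le⟩
  obtain ⟨z, hzmem, hzF⟩ := hiv h0mem
  have hzpos : 0 < z := by
    rcases lt_or_eq_of_le hzmem.1 with h | h
    · exact h
    · exfalso; rw [← h] at hzF; rw [hzF] at hF0; exact lt_irrefl 0 hF0
  refine ⟨z, ⟨hzpos, ?_⟩, ?_⟩
  · have : s * z - Real.exp (g z) = 0 := hzF
    simp only [hg, hc] at this
    linarith [this]
  · rintro w ⟨hwpos, hw⟩
    have hwF : F w = 0 := by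
      simp only [hF, hg, hc]
      simp only [hg, hc] at hw
      linarith [hw]
    have hzF' : F z = 0 := hzF
    exact hmono.injOn hwpos.le (le_of_lt hzpos) (by rw [hwF, hzF'])
end

section
/- Let 0 < s₁ < s₂ and let z₁ > 0 and z₂ > 0 be the unique solutions of s·z = exp(((α/α̃ − 1)²/(α·σ²·z + 1)² − 1)·ν²·T/(2·σ²)) for s = s₁ and s = s₂ respectively. Then z₁ > z₂; that is, the rescaled integral parameter z(s) is strictly decreasing in the effective herd coefficient s (equivalently, strictly increasing in the policy utility u = η − s). -/
/-- The rescaled integral parameter is strictly decreasing in the effective herd coefficient. -/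
theorem rescaled_parameter_strict_anti
    (ν σ T αl α : ℝ) (hν : 0 < ν) (hσ : 0 < σ) (hT : 0 < T)
    (hαl : 0 < αl) (hα : 0 < α)
    (s₁ s₂ z₁ z₂ : ℝ) (hs₁ : 0 < s₁) (hs : s₁ < s₂)
    (hz₁ : 0 < z₁) (hz₂ : 0 < z₂)
    (hfix₁ : s₁ * z₁ = Real.exp (((α / αl - 1) ^ 2 / (α * σ ^ 2 * z₁ + 1) ^ 2 - 1)
      * ν ^ 2 * T / (2 * σ ^ 2)))
    (hfix₂ : s₂ * z₂ = Real.exp (((α / αl - 1) ^ 2 / (α * σ ^ 2 * z₂ + 1) ^ 2 - 1)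
      * ν ^ 2 * T / (2 * σ ^ 2))) :
    z₂ < z₁ := by
  by_contra h
  push_neg at h
  have hd₁ : (0:ℝ) < α * σ ^ 2 * z₁ + 1 := by positivity
  have h1 : (α / αl - 1) ^ 2 / (α * σ ^ 2 * z₂ + 1) ^ 2
      ≤ (α / αl - 1) ^ 2 / (α * σ ^ 2 * z₁ + 1) ^ 2 := by
    gcongr <;> nlinarith
  have h2 : ((α / αl - 1) ^ 2 / (α * σ ^ 2 * z₂ + 1) ^ 2 - 1) * ν ^ 2 * T
      ≤ ((α / αl - 1) ^ 2 / (α * σ ^ 2 * z₁ + 1) ^ 2 - 1) * ν ^ 2 * T := by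
    exact mul_le_mul_of_nonneg_right
      (mul_le_mul_of_nonneg_right (sub_le_sub_right h1 1) (sq_nonneg ν)) hT.le
  have h3 : Real.exp (((α / αl - 1) ^ 2 / (α * σ ^ 2 * z₂ + 1) ^ 2 - 1)
      * ν ^ 2 * T / (2 * σ ^ 2))
      ≤ Real.exp (((α / αl - 1) ^ 2 / (α * σ ^ 2 * z₁ + 1) ^ 2 - 1)
      * ν ^ 2 * T / (2 * σ ^ 2)) := by
    apply Real.exp_le_exp.mpr
    apply div_le_div_of_nonneg_right h2 (by positivity) |>.trans_eq rfl
  nlinarith [h3, hfix₁, hfix₂]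
end

section
/- Let 0 ≤ s₁ ≤ s₂ and let μ₁ > 0 and μ₂ > 0 be the unique solutions of the fixed-point equation (8) with parameters s₁ and s₂ respectively. Then μ₁ ≤ μ₂; that is, the integral parameter μ(s) is monotone nondecreasing in the effective herd coefficient s. -/
/-- The integral parameter is monotone nondecreasing in the effective herd coefficient. -/
theorem integral_parameter_monotone
    (ν σ T αl α : ℝ) (hν : 0 < ν) (hσ : 0 < σ) (hT : 0 < T)
    (hαl : 0 < αl) (hα : 0 < α)
    (s₁ s₂ μ₁ μ₂ : ℝ) (hs₁ : 0 ≤ s₁) (hs : s₁ ≤ s₂)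
    (hμ₁ : 0 < μ₁) (hμ₂ : 0 < μ₂)
    (hfix₁ : μ₁ = Real.exp (((α / αl - 1) ^ 2 * s₁ ^ 2 / (α * σ ^ 2 * μ₁ + s₁) ^ 2 - 1)
      * ν ^ 2 * T / (2 * σ ^ 2)))
    (hfix₂ : μ₂ = Real.exp (((α / αl - 1) ^ 2 * s₂ ^ 2 / (α * σ ^ 2 * μ₂ + s₂) ^ 2 - 1)
      * ν ^ 2 * T / (2 * σ ^ 2))) :
    μ₁ ≤ μ₂ := by
  by_contra h
  push_neg at h
  have ha : 0 < α * σ ^ 2 := by positivity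
  have hd1 : 0 < α * σ ^ 2 * μ₁ + s₁ := by nlinarith
  have hd2 : 0 < α * σ ^ 2 * μ₂ + s₂ := by nlinarith
  have hg : s₁ / (α * σ ^ 2 * μ₁ + s₁) ≤ s₂ / (α * σ ^ 2 * μ₂ + s₂) := by
    rw [div_le_div_iff₀ hd1 hd2]
    have h1 : s₁ * μ₂ ≤ s₂ * μ₁ := by nlinarith
    nlinarith [mul_le_mul_of_nonneg_left h1 ha.le]
  have hsq : s₁ ^ 2 / (α * σ ^ 2 * μ₁ + s₁) ^ 2 ≤ s₂ ^ 2 / (α * σ ^ 2 * μ₂ + s₂) ^ 2 := by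
    rw [← div_pow, ← div_pow]
    exact pow_le_pow_left₀ (div_nonneg hs₁ hd1.le) hg 2
  have hc : (0:ℝ) ≤ (α / αl - 1) ^ 2 := sq_nonneg _
  have hk : (0:ℝ) < ν ^ 2 * T / (2 * σ ^ 2) := by positivity
  have hle : μ₁ ≤ μ₂ := by
    rw [hfix₁, hfix₂]
    apply Real.exp_le_exp.mpr
    have hE : (α / αl - 1) ^ 2 * s₁ ^ 2 / (α * σ ^ 2 * μ₁ + s₁) ^ 2 ≤
        (α / αl - 1) ^ 2 * s₂ ^ 2 / (α * σ ^ 2 * μ₂ + s₂) ^ 2 := by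
      rw [mul_div_assoc, mul_div_assoc]
      exact mul_le_mul_of_nonneg_left hsq hc
    have hσ2 : (0:ℝ) < 2 * σ ^ 2 := by positivity
    rw [div_le_div_iff₀ hσ2 hσ2]
    nlinarith [mul_le_mul_of_nonneg_right hE (by positivity : (0:ℝ) ≤ ν ^ 2 * T)]
  linarith
end

section
/- Let 0 < s₁ ≤ s₂ and let μ₁ > 0 and μ₂ > 0 be the unique solutions of the fixed-point equation (8) with parameters s₁ and s₂ respectively. Then μ₁/(α·σ²·μ₁ + s₁) ≥ μ₂/(α·σ²·μ₂ + s₂). (Consequently the follower's deviation under regulation (effective herd coefficient s = η − u(q(η)) ≤ η) is at least the deviation without regulation (s = η), i.e. δ(ω(η)) ≥ δ(π̄(η)).) -/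
/-- The quantity μ(s)/(α σ² μ(s) + s) is nonincreasing in s; hence the deviation
under regulation is at least the deviation without regulation. -/
theorem deviation_ratio_antitone
    (ν σ T αl α : ℝ) (hν : 0 < ν) (hσ : 0 < σ) (hT : 0 < T)
    (hαl : 0 < αl) (hα : 0 < α)
    (s₁ s₂ μ₁ μ₂ : ℝ) (hs₁ : 0 < s₁) (hs : s₁ ≤ s₂)
    (hμ₁ : 0 < μ₁) (hμ₂ : 0 < μ₂)
    (hfix₁ : μ₁ = Real.exp (((α / αl - 1) ^ 2 * s₁ ^ 2 / (α * σ ^ 2 * μ₁ + s₁) ^ 2 - 1)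
      * ν ^ 2 * T / (2 * σ ^ 2)))
    (hfix₂ : μ₂ = Real.exp (((α / αl - 1) ^ 2 * s₂ ^ 2 / (α * σ ^ 2 * μ₂ + s₂) ^ 2 - 1)
      * ν ^ 2 * T / (2 * σ ^ 2))) :
    μ₂ / (α * σ ^ 2 * μ₂ + s₂) ≤ μ₁ / (α * σ ^ 2 * μ₁ + s₁) := by
  have hs₂ : 0 < s₂ := lt_of_lt_of_le hs₁ hs
  have hd₁ : 0 < α * σ ^ 2 * μ₁ + s₁ := by positivity
  have hd₂ : 0 < α * σ ^ 2 * μ₂ + s₂ := by positivity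
  by_contra hcon
  push_neg at hcon
  -- from r₁ < r₂ we get μ₁ s₂ < μ₂ s₁, hence s₂ d₁ < s₁ d₂
  rw [div_lt_div_iff₀ hd₁ hd₂] at hcon
  have hms : μ₁ * s₂ < μ₂ * s₁ := by nlinarith
  have hb : 0 < α * σ ^ 2 := by positivity
  have hsd : s₂ * (α * σ ^ 2 * μ₁ + s₁) < s₁ * (α * σ ^ 2 * μ₂ + s₂) := by
    nlinarith [mul_lt_mul_of_pos_left hms hb]
  -- hence the exponents are ordered, so μ₂ ≤ μ₁
  have hE : (α / αl - 1) ^ 2 * s₂ ^ 2 / (α * σ ^ 2 * μ₂ + s₂) ^ 2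
      ≤ (α / αl - 1) ^ 2 * s₁ ^ 2 / (α * σ ^ 2 * μ₁ + s₁) ^ 2 := by
    rw [div_le_div_iff₀ (by positivity) (by positivity)]
    have hsq : (s₂ * (α * σ ^ 2 * μ₁ + s₁)) ^ 2 ≤ (s₁ * (α * σ ^ 2 * μ₂ + s₂)) ^ 2 :=
      pow_le_pow_left₀ (by positivity) hsd.le 2
    nlinarith [sq_nonneg (α / αl - 1), hsq]
  have hμle : μ₂ ≤ μ₁ := by
    rw [hfix₁, hfix₂]
    apply Real.exp_le_exp.mpr
    gcongr
  -- then r₂ ≤ r₁, contradiction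
  have : μ₂ * (α * σ ^ 2 * μ₁ + s₁) ≤ μ₁ * (α * σ ^ 2 * μ₂ + s₂) := by
    nlinarith [mul_le_mul hμle hs hs₁.le hμ₁.le]
  linarith
end

section
/- (Content of Theorem 4: monotonicity of the expected terminal fund in the policy.) For s > 0 let μ(s) > 0 be the unique solution of the fixed-point equation (8) with parameter s, and define E(s) := ((α̃·σ²·μ(s) + s)/(α·σ²·μ(s) + s))·(ν²·T/(α̃·σ²)) (the follower's expected terminal fund when the effective herd coefficient is s = η − u(q(η))). Then for all 0 < s₁ ≤ s₂: if α ≤ α̃ then E(s₁) ≥ E(s₂) (a stronger policy, i.e. smaller s, weakly increases the expected terminal fund), and if α ≥ α̃ then E(s₁) ≤ E(s₂) (a stronger policy weakly decreases it). -/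
/-- Monotonicity of the expected terminal fund in the effective herd coefficient
(Theorem 4: a stronger policy increases the fund iff the follower is more risk-taking). -/
theorem expected_fund_monotone_policy
    (ν σ T αl α : ℝ) (hν : 0 < ν) (hσ : 0 < σ) (hT : 0 < T)
    (hαl : 0 < αl) (hα : 0 < α)
    (μ : ℝ → ℝ)
    (hμ : ∀ s : ℝ, 0 < s → 0 < μ s ∧
      μ s = Real.exp (((α / αl - 1) ^ 2 * s ^ 2 / (α * σ ^ 2 * μ s + s) ^ 2 - 1)
        * ν ^ 2 * T / (2 * σ ^ 2)))
    (s₁ s₂ : ℝ) (hs₁ : 0 < s₁) (hs : s₁ ≤ s₂) :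
    (α ≤ αl →
      (αl * σ ^ 2 * μ s₂ + s₂) / (α * σ ^ 2 * μ s₂ + s₂) * (ν ^ 2 * T / (αl * σ ^ 2)) ≤
      (αl * σ ^ 2 * μ s₁ + s₁) / (α * σ ^ 2 * μ s₁ + s₁) * (ν ^ 2 * T / (αl * σ ^ 2))) ∧
    (αl ≤ α →
      (αl * σ ^ 2 * μ s₁ + s₁) / (α * σ ^ 2 * μ s₁ + s₁) * (ν ^ 2 * T / (αl * σ ^ 2)) ≤
      (αl * σ ^ 2 * μ s₂ + s₂) / (α * σ ^ 2 * μ s₂ + s₂) * (ν ^ 2 * T / (αl * σ ^ 2))) := by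
  have hs₂ : 0 < s₂ := lt_of_lt_of_le hs₁ hs
  obtain ⟨hm₁, he₁⟩ := hμ s₁ hs₁
  obtain ⟨hm₂, he₂⟩ := hμ s₂ hs₂
  have hσ2 : (0:ℝ) < σ ^ 2 := by positivity
  have hd₁ : 0 < α * σ ^ 2 * μ s₁ + s₁ := by positivity
  have hd₂ : 0 < α * σ ^ 2 * μ s₂ + s₂ := by positivity
  have hfac : 0 < ν ^ 2 * T / (αl * σ ^ 2) := by positivity
  -- key monotonicity: μ s₂ / s₂ ≤ μ s₁ / s₁
  have key : s₁ * μ s₂ ≤ s₂ * μ s₁ := by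
    by_contra h
    push_neg at h
    -- then x₂ < x₁ where x_i = s_i / d_i
    have hx : s₂ / (α * σ ^ 2 * μ s₂ + s₂) < s₁ / (α * σ ^ 2 * μ s₁ + s₁) := by
      rw [div_lt_div_iff₀ hd₂ hd₁]
      nlinarith [mul_pos hα hσ2]
    have hx₂pos : 0 < s₂ / (α * σ ^ 2 * μ s₂ + s₂) := by positivity
    have hxsq : (s₂ / (α * σ ^ 2 * μ s₂ + s₂)) ^ 2 ≤ (s₁ / (α * σ ^ 2 * μ s₁ + s₁)) ^ 2 := by
      apply pow_le_pow_left₀ hx₂pos.le hx.le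
    rw [div_pow, div_pow] at hxsq
    have hmle : μ s₂ ≤ μ s₁ := by
      rw [he₁, he₂]
      apply Real.exp_le_exp.2
      have hc : (0:ℝ) ≤ (α / αl - 1) ^ 2 := sq_nonneg _
      have h1 : (α / αl - 1) ^ 2 * s₂ ^ 2 / (α * σ ^ 2 * μ s₂ + s₂) ^ 2 ≤
          (α / αl - 1) ^ 2 * s₁ ^ 2 / (α * σ ^ 2 * μ s₁ + s₁) ^ 2 := by
        rw [mul_div_assoc, mul_div_assoc]
        exact mul_le_mul_of_nonneg_left hxsq hc
      have h2 : (0:ℝ) < 2 * σ ^ 2 := by positivity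
      apply (div_le_div_iff_of_pos_right h2).2
      have := mul_le_mul_of_nonneg_right (mul_le_mul_of_nonneg_right
        (sub_le_sub_right h1 1) (sq_nonneg ν)) hT.le
      linarith
    nlinarith
  refine ⟨fun hle => ?_, fun hle => ?_⟩
  · apply mul_le_mul_of_nonneg_right _ hfac.le
    rw [div_le_div_iff₀ hd₂ hd₁]
    nlinarith [mul_pos hα hσ2, mul_nonneg (sub_nonneg.2 hle) (mul_nonneg hσ2.le (sub_nonneg.2 key))]
  · apply mul_le_mul_of_nonneg_right _ hfac.le
    rw [div_le_div_iff₀ hd₁ hd₂]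
    nlinarith [mul_pos hα hσ2, mul_nonneg (sub_nonneg.2 hle) (mul_nonneg hσ2.le (sub_nonneg.2 key))]
end

section
/- (Content of Theorem 8: strict positivity of the economic gain.) Suppose α < α̃, and let 0 < s < η, where s = η − u(q(η)) is the effective herd coefficient under regulation. For t > 0 let μ(t) > 0 be the unique solution of the fixed-point equation (8) with parameter t, and let E(t) := ((α̃·σ²·μ(t) + t)/(α·σ²·μ(t) + t))·(ν²·T/(α̃·σ²)). Then the economic gain is strictly positive: E(s) − E(η) > 0. -/
/-- Strict positivity of the economic gain (content of Theorem 8). -/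
theorem economic_gain_pos
    (ν σ T αl α : ℝ) (hν : 0 < ν) (hσ : 0 < σ) (hT : 0 < T)
    (hαl : 0 < αl) (hα : 0 < α) (hlt : α < αl)
    (s η : ℝ) (hs : 0 < s) (hsη : s < η)
    (μ : ℝ → ℝ)
    (hμ : ∀ t : ℝ, 0 < t → 0 < μ t ∧
      μ t = Real.exp (((α / αl - 1) ^ 2 * t ^ 2 / (α * σ ^ 2 * μ t + t) ^ 2 - 1)
        * ν ^ 2 * T / (2 * σ ^ 2))) :
    0 < (αl * σ ^ 2 * μ s + s) / (α * σ ^ 2 * μ s + s) * (ν ^ 2 * T / (αl * σ ^ 2)) -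
        (αl * σ ^ 2 * μ η + η) / (α * σ ^ 2 * μ η + η) * (ν ^ 2 * T / (αl * σ ^ 2)) := by
  obtain ⟨hμs, heqs⟩ := hμ s hs
  have hη : 0 < η := hs.trans hsη
  obtain ⟨hμη, heqη⟩ := hμ η hη
  have hσ2 : (0:ℝ) < σ ^ 2 := by positivity
  have hds : 0 < α * σ ^ 2 * μ s + s := by positivity
  have hdη : 0 < α * σ ^ 2 * μ η + η := by positivity
  -- core inequality: s * μ η < η * μ s
  have key : s * μ η < η * μ s := by
    by_contra h
    push_neg at h  -- η * μ s ≤ s * μ η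
    have h1 : η / (α * σ ^ 2 * μ η + η) ≤ s / (α * σ ^ 2 * μ s + s) := by
      rw [div_le_div_iff₀ hdη hds]
      nlinarith [hσ2.le, hα.le, mul_nonneg hα.le hσ2.le]
    have hq1 : (0:ℝ) ≤ η / (α * σ ^ 2 * μ η + η) := by positivity
    have h2 : (η / (α * σ ^ 2 * μ η + η)) ^ 2 ≤ (s / (α * σ ^ 2 * μ s + s)) ^ 2 := by
      nlinarith
    have h3 : μ η ≤ μ s := by
      rw [heqη, heqs]
      apply Real.exp_le_exp.mpr
      have hqη : (α / αl - 1) ^ 2 * η ^ 2 / (α * σ ^ 2 * μ η + η) ^ 2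
          = (α / αl - 1) ^ 2 * (η / (α * σ ^ 2 * μ η + η)) ^ 2 := by
        field_simp
      have hqs : (α / αl - 1) ^ 2 * s ^ 2 / (α * σ ^ 2 * μ s + s) ^ 2
          = (α / αl - 1) ^ 2 * (s / (α * σ ^ 2 * μ s + s)) ^ 2 := by
        field_simp
      rw [hqη, hqs]
      have hk : (0:ℝ) ≤ (α / αl - 1) ^ 2 := sq_nonneg _
      have h4 := mul_le_mul_of_nonneg_left h2 hk
      have h5 : ((α / αl - 1) ^ 2 * (η / (α * σ ^ 2 * μ η + η)) ^ 2 - 1) * ν ^ 2 * T ≤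
          ((α / αl - 1) ^ 2 * (s / (α * σ ^ 2 * μ s + s)) ^ 2 - 1) * ν ^ 2 * T := by
        nlinarith [mul_le_mul_of_nonneg_right (sub_le_sub_right h4 1)
          (mul_nonneg (sq_nonneg ν) hT.le)]
      exact (div_le_div_iff_of_pos_right (by positivity : (0:ℝ) < 2 * σ ^ 2)).mpr h5
    have hB : η * μ s ≤ s * μ s := h.trans (mul_le_mul_of_nonneg_left h3 hs.le)
    exact absurd ((mul_le_mul_iff_of_pos_right hμs).mp hB) (not_le.mpr hsη)
  clear hμ heqs heqη
  have hratio : (αl * σ ^ 2 * μ η + η) / (α * σ ^ 2 * μ η + η) <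
      (αl * σ ^ 2 * μ s + s) / (α * σ ^ 2 * μ s + s) := by
    rw [div_lt_div_iff₀ hdη hds]
    nlinarith [mul_pos (mul_pos (sub_pos.mpr hlt) hσ2) (sub_pos.mpr key)]
  have hc : (0:ℝ) < ν ^ 2 * T / (αl * σ ^ 2) := by positivity
  have := mul_lt_mul_of_pos_right hratio hc
  linarith
end

section
/- (Quadratic decay of the unregulated deviation.) For η > 0 let μ̄(η) > 0 be the unique solution of the fixed-point equation (8) with parameter η, and let δ̄(η) := ((α̃ − α)·σ²·μ̄(η)/(α·σ²·μ̄(η) + η))²·ν²·T/(2·α̃²·σ⁴) be the deviation of the follower's optimal decision without regulation. Then for every η > 0, δ̄(η) ≤ C/η², where C := ((α̃ − α)·σ²·M)²·ν²·T/(2·α̃²·σ⁴) and M := exp(((α/α̃ − 1)² − 1)·ν²·T/(2·σ²)). In particular δ̄(η) = O(η⁻²) as η → ∞. -/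
/-- Quadratic decay of the unregulated deviation: δ̄(η) ≤ C/η². -/
theorem unregulated_deviation_quadratic_decay
    (ν σ T αl α : ℝ) (hν : 0 < ν) (hσ : 0 < σ) (hT : 0 < T)
    (hαl : 0 < αl) (hα : 0 < α)
    (μbar : ℝ → ℝ)
    (hμbar : ∀ η : ℝ, 0 < η → 0 < μbar η ∧
      μbar η = Real.exp (((α / αl - 1) ^ 2 * η ^ 2 / (α * σ ^ 2 * μbar η + η) ^ 2 - 1)
        * ν ^ 2 * T / (2 * σ ^ 2))) :
    ∀ η : ℝ, 0 < η →
      ((αl - α) * σ ^ 2 * μbar η / (α * σ ^ 2 * μbar η + η)) ^ 2 * ν ^ 2 * T / (2 * αl ^ 2 * σ ^ 4)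
        ≤ (((αl - α) * σ ^ 2 * Real.exp (((α / αl - 1) ^ 2 - 1) * ν ^ 2 * T / (2 * σ ^ 2))) ^ 2
            * ν ^ 2 * T / (2 * αl ^ 2 * σ ^ 4)) / η ^ 2 := by
  intro η hη
  obtain ⟨hμ, heq⟩ := hμbar η hη
  set μ := μbar η with hμdef
  set M := Real.exp (((α / αl - 1) ^ 2 - 1) * ν ^ 2 * T / (2 * σ ^ 2)) with hMdef
  have hMpos : 0 < M := Real.exp_pos _
  have hden : 0 < α * σ ^ 2 * μ + η := by positivity
  have hdenη : η ≤ α * σ ^ 2 * μ + η := by nlinarith [mul_pos (mul_pos hα (pow_pos hσ 2)) hμ]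
  have hμM : μ ≤ M := by
    rw [heq, hMdef]
    apply Real.exp_le_exp.2
    have h1 : η ^ 2 / (α * σ ^ 2 * μ + η) ^ 2 ≤ 1 := by
      rw [div_le_one (by positivity)]
      nlinarith
    have h2 : (α / αl - 1) ^ 2 * η ^ 2 / (α * σ ^ 2 * μ + η) ^ 2 ≤ (α / αl - 1) ^ 2 := by
      rw [mul_div_assoc]
      nlinarith [sq_nonneg (α / αl - 1)]
    gcongr
  have hkey : μ / (α * σ ^ 2 * μ + η) ≤ M / η :=
    div_le_div₀ hMpos.le hμM hη hdenη
  have hsq : ((αl - α) * σ ^ 2 * μ / (α * σ ^ 2 * μ + η)) ^ 2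
      ≤ ((αl - α) * σ ^ 2 * M) ^ 2 / η ^ 2 := by
    have h0 : 0 ≤ μ / (α * σ ^ 2 * μ + η) := by positivity
    have := pow_le_pow_left₀ h0 hkey 2
    have hc : (0:ℝ) ≤ ((αl - α) * σ ^ 2) ^ 2 := sq_nonneg _
    calc ((αl - α) * σ ^ 2 * μ / (α * σ ^ 2 * μ + η)) ^ 2
        = ((αl - α) * σ ^ 2) ^ 2 * (μ / (α * σ ^ 2 * μ + η)) ^ 2 := by ring
      _ ≤ ((αl - α) * σ ^ 2) ^ 2 * (M / η) ^ 2 := by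
          exact mul_le_mul_of_nonneg_left this hc
      _ = ((αl - α) * σ ^ 2 * M) ^ 2 / η ^ 2 := by ring
  have hrw : (((αl - α) * σ ^ 2 * M) ^ 2 * ν ^ 2 * T / (2 * αl ^ 2 * σ ^ 4)) / η ^ 2
      = (((αl - α) * σ ^ 2 * M) ^ 2 / η ^ 2) * ν ^ 2 * T / (2 * αl ^ 2 * σ ^ 4) := by
    ring
  rw [hrw]
  gcongr
end

section
/- (Integrability of the unregulated deviation, used for the convergence of the constant compensation utility χ.) For η > 0 let μ̄(η) > 0 be the unique solution of the fixed-point equation (8) with parameter η, and let δ̄(η) := ((α̃ − α)·σ²·μ̄(η)/(α·σ²·μ̄(η) + η))²·ν²·T/(2·α̃²·σ⁴). Then the function η ↦ δ̄(η) is integrable on (0, ∞), i.e. the improper integral ∫₀^∞ δ̄(η) dη converges to a finite value. -/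
/-- Integrability of the unregulated deviation on (0, ∞). -/
theorem unregulated_deviation_integrable
    (ν σ T αl α : ℝ) (hν : 0 < ν) (hσ : 0 < σ) (hT : 0 < T)
    (hαl : 0 < αl) (hα : 0 < α)
    (μbar : ℝ → ℝ)
    (hμbar : ∀ η : ℝ, 0 < η → 0 < μbar η ∧
      μbar η = Real.exp (((α / αl - 1) ^ 2 * η ^ 2 / (α * σ ^ 2 * μbar η + η) ^ 2 - 1)
        * ν ^ 2 * T / (2 * σ ^ 2))) :
    MeasureTheory.IntegrableOn
      (fun η : ℝ =>
        ((αl - α) * σ ^ 2 * μbar η / (α * σ ^ 2 * μbar η + η)) ^ 2 * ν ^ 2 * T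
          / (2 * αl ^ 2 * σ ^ 4))
      (Set.Ioi 0) := by
  set F : ℝ → ℝ := fun η : ℝ =>
        ((αl - α) * σ ^ 2 * μbar η / (α * σ ^ 2 * μbar η + η)) ^ 2 * ν ^ 2 * T
          / (2 * αl ^ 2 * σ ^ 4) with hFdef
  set M : ℝ := Real.exp (((α / αl - 1) ^ 2 - 1) * ν ^ 2 * T / (2 * σ ^ 2)) with hMdef
  have hMpos : 0 < M := Real.exp_pos _
  -- positivity of denominators
  have hden : ∀ η : ℝ, 0 < η → 0 < α * σ ^ 2 * μbar η + η := by
    intro η hη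
    have h1 : 0 < α * σ ^ 2 * μbar η :=
      mul_pos (by positivity) (hμbar η hη).1
    linarith
  -- monotonicity of μbar on (0, ∞)
  have hmono : MonotoneOn μbar (Set.Ioi 0) := by
    intro x hx y hy hxy
    by_contra hcon
    push_neg at hcon
    obtain ⟨hμx, hex⟩ := hμbar x hx
    obtain ⟨hμy, hey⟩ := hμbar y hy
    have hx0 : (0:ℝ) < x := hx
    have hy0 : (0:ℝ) < y := hy
    have hdx : 0 < α * σ ^ 2 * μbar x + x := hden x hx
    have hdy : 0 < α * σ ^ 2 * μbar y + y := hden y hy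
    have h1 : x * (α * σ ^ 2 * μbar y + y) ≤ y * (α * σ ^ 2 * μbar x + x) := by
      have hxy' : x * μbar y ≤ y * μbar x :=
        mul_le_mul hxy hcon.le hμy.le (lt_of_lt_of_le hx0 hxy).le
      nlinarith [mul_le_mul_of_nonneg_left hxy' (le_of_lt (mul_pos hα (pow_pos hσ 2)))]
    have h2 : x ^ 2 / (α * σ ^ 2 * μbar x + x) ^ 2
        ≤ y ^ 2 / (α * σ ^ 2 * μbar y + y) ^ 2 := by
      rw [div_le_div_iff₀ (pow_pos hdx 2) (pow_pos hdy 2)]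
      calc x ^ 2 * (α * σ ^ 2 * μbar y + y) ^ 2
          = (x * (α * σ ^ 2 * μbar y + y)) ^ 2 := by ring
        _ ≤ (y * (α * σ ^ 2 * μbar x + x)) ^ 2 :=
            pow_le_pow_left₀ (mul_nonneg hx0.le hdy.le) h1 2
        _ = y ^ 2 * (α * σ ^ 2 * μbar x + x) ^ 2 := by ring
    have h4 : (α / αl - 1) ^ 2 * x ^ 2 / (α * σ ^ 2 * μbar x + x) ^ 2
        ≤ (α / αl - 1) ^ 2 * y ^ 2 / (α * σ ^ 2 * μbar y + y) ^ 2 := by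
      rw [mul_div_assoc, mul_div_assoc]
      exact mul_le_mul_of_nonneg_left h2 (sq_nonneg _)
    have h3 : μbar x ≤ μbar y := by
      rw [hex, hey, Real.exp_le_exp]
      have h5 := mul_le_mul_of_nonneg_right
        (mul_le_mul_of_nonneg_right (sub_le_sub_right h4 1) (sq_nonneg ν)) hT.le
      exact div_le_div_of_nonneg_right h5 (by positivity) |>.trans_eq rfl
    exact absurd h3 (not_le.mpr hcon)
  -- upper bound for μbar
  have hM : ∀ η : ℝ, 0 < η → μbar η ≤ M := by
    intro η hη
    obtain ⟨hμp, he⟩ := hμbar η hη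
    have hd : 0 < α * σ ^ 2 * μbar η + η := hden η hη
    have hr : η ^ 2 / (α * σ ^ 2 * μbar η + η) ^ 2 ≤ 1 := by
      rw [div_le_one (pow_pos hd 2)]
      apply pow_le_pow_left₀ hη.le
      nlinarith [mul_pos (mul_pos hα (pow_pos hσ 2)) hμp]
    have h4 : (α / αl - 1) ^ 2 * η ^ 2 / (α * σ ^ 2 * μbar η + η) ^ 2
        ≤ (α / αl - 1) ^ 2 := by
      rw [mul_div_assoc]
      calc (α / αl - 1) ^ 2 * (η ^ 2 / (α * σ ^ 2 * μbar η + η) ^ 2)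
          ≤ (α / αl - 1) ^ 2 * 1 := mul_le_mul_of_nonneg_left hr (sq_nonneg _)
        _ = (α / αl - 1) ^ 2 := mul_one _
    rw [he, hMdef, Real.exp_le_exp]
    have h5 := mul_le_mul_of_nonneg_right
      (mul_le_mul_of_nonneg_right (sub_le_sub_right h4 1) (sq_nonneg ν)) hT.le
    exact div_le_div_of_nonneg_right h5 (by positivity)
  -- nonnegativity of F
  have hFnonneg : ∀ η : ℝ, 0 ≤ F η := by
    intro η
    apply div_nonneg _ (by positivity)
    exact mul_nonneg (mul_nonneg (sq_nonneg _) (sq_nonneg ν)) hT.le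
  -- a.e. measurability of F on (0,∞)
  have hmeas : AEMeasurable μbar (MeasureTheory.volume.restrict (Set.Ioi 0)) :=
    aemeasurable_restrict_of_monotoneOn measurableSet_Ioi hmono
  have hFmeas : MeasureTheory.AEStronglyMeasurable F
      (MeasureTheory.volume.restrict (Set.Ioi 0)) := by
    apply AEMeasurable.aestronglyMeasurable
    apply AEMeasurable.div_const
    apply AEMeasurable.mul_const
    apply AEMeasurable.mul_const
    apply AEMeasurable.pow_const
    exact (hmeas.const_mul _).div ((hmeas.const_mul _).add aemeasurable_id)
  -- split (0,∞) = (0,1] ∪ (1,∞)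
  have hsplit : Set.Ioi (0:ℝ) = Set.Ioc (0:ℝ) 1 ∪ Set.Ioi 1 :=
    (Set.Ioc_union_Ioi_eq_Ioi zero_le_one).symm
  rw [hsplit]
  apply MeasureTheory.IntegrableOn.union
  · -- on (0,1]: bounded by a constant
    have hsub : Set.Ioc (0:ℝ) 1 ⊆ Set.Ioi 0 := Set.Ioc_subset_Ioi_self
    apply MeasureTheory.Integrable.mono'
      (g := fun _ : ℝ => ((αl - α) / α) ^ 2 * ν ^ 2 * T / (2 * αl ^ 2 * σ ^ 4))
    · exact (MeasureTheory.integrableOn_const_iff (by finiteness)).mpr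
        (Or.inr measure_Ioc_lt_top)
    · exact hFmeas.mono_measure (MeasureTheory.Measure.restrict_mono hsub le_rfl)
    · filter_upwards [MeasureTheory.ae_restrict_mem measurableSet_Ioc] with η hη
      have hη0 : 0 < η := hη.1
      obtain ⟨hμp, _⟩ := hμbar η hη0
      have hd : 0 < α * σ ^ 2 * μbar η + η := hden η hη0
      rw [Real.norm_eq_abs, abs_of_nonneg (hFnonneg η)]
      have hr : ((αl - α) * σ ^ 2 * μbar η / (α * σ ^ 2 * μbar η + η)) ^ 2
          ≤ ((αl - α) / α) ^ 2 := by
        rw [div_pow, div_pow, div_le_div_iff₀ (pow_pos hd 2) (pow_pos hα 2)]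
        have hle : α * σ ^ 2 * μbar η ≤ α * σ ^ 2 * μbar η + η := by linarith
        have hsq : (α * σ ^ 2 * μbar η) ^ 2 ≤ (α * σ ^ 2 * μbar η + η) ^ 2 :=
          pow_le_pow_left₀ (le_of_lt (mul_pos (mul_pos hα (pow_pos hσ 2)) hμp)) hle 2
        nlinarith [mul_le_mul_of_nonneg_left hsq (sq_nonneg (αl - α)), sq_nonneg σ]
      have h5 := mul_le_mul_of_nonneg_right
        (mul_le_mul_of_nonneg_right hr (sq_nonneg ν)) hT.le
      exact div_le_div_of_nonneg_right h5 (by positivity)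
  · -- on (1,∞): bounded by B / η²
    have hsub : Set.Ioi (1:ℝ) ⊆ Set.Ioi 0 := fun x hx => Set.mem_Ioi.mpr (lt_trans zero_lt_one hx)
    set B : ℝ := ((αl - α) * σ ^ 2 * M) ^ 2 * ν ^ 2 * T / (2 * αl ^ 2 * σ ^ 4) with hBdef
    apply MeasureTheory.Integrable.mono' (g := fun η : ℝ => B * (η ^ 2)⁻¹)
    · have h0 : MeasureTheory.IntegrableOn (fun x : ℝ => x ^ (-2 : ℝ)) (Set.Ioi 1) :=
        integrableOn_Ioi_rpow_of_lt (by norm_num) one_pos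
      have h1 : MeasureTheory.IntegrableOn (fun x : ℝ => (x ^ 2)⁻¹) (Set.Ioi 1) := by
        apply h0.congr_fun _ measurableSet_Ioi
        intro x hx
        have hx0 : (0:ℝ) ≤ x := le_of_lt (lt_trans zero_lt_one hx)
        show x ^ (-2 : ℝ) = (x ^ 2)⁻¹
        rw [Real.rpow_neg hx0]
        norm_num [Real.rpow_natCast x 2]
      exact h1.const_mul B
    · exact hFmeas.mono_measure (MeasureTheory.Measure.restrict_mono hsub le_rfl)
    · filter_upwards [MeasureTheory.ae_restrict_mem measurableSet_Ioi] with η hη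
      have hη1 : (1:ℝ) < η := hη
      have hη0 : 0 < η := lt_trans zero_lt_one hη1
      obtain ⟨hμp, _⟩ := hμbar η hη0
      have hd : 0 < α * σ ^ 2 * μbar η + η := hden η hη0
      rw [Real.norm_eq_abs, abs_of_nonneg (hFnonneg η)]
      have hr : ((αl - α) * σ ^ 2 * μbar η / (α * σ ^ 2 * μbar η + η)) ^ 2
          ≤ ((αl - α) * σ ^ 2 * M / η) ^ 2 := by
        rw [div_pow, div_pow, div_le_div_iff₀ (pow_pos hd 2) (pow_pos hη0 2)]
        have hμ2 : (μbar η) ^ 2 ≤ M ^ 2 := pow_le_pow_left₀ hμp.le (hM η hη0) 2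
        have hη2 : η ^ 2 ≤ (α * σ ^ 2 * μbar η + η) ^ 2 := by
          apply pow_le_pow_left₀ hη0.le
          nlinarith [mul_pos (mul_pos hα (pow_pos hσ 2)) hμp]
        nlinarith [mul_le_mul_of_nonneg_left
          (mul_le_mul hμ2 hη2 (sq_nonneg η) (sq_nonneg M)) (sq_nonneg ((αl - α) * σ ^ 2))]
      have h5 := mul_le_mul_of_nonneg_right
        (mul_le_mul_of_nonneg_right hr (sq_nonneg ν)) hT.le
      have h6 : F η ≤ ((αl - α) * σ ^ 2 * M / η) ^ 2 * ν ^ 2 * T / (2 * αl ^ 2 * σ ^ 4) :=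
        div_le_div_of_nonneg_right h5 (by positivity)
      calc F η ≤ ((αl - α) * σ ^ 2 * M / η) ^ 2 * ν ^ 2 * T / (2 * αl ^ 2 * σ ^ 4) := h6
        _ = B * (η ^ 2)⁻¹ := by rw [hBdef]; ring
end

section
/- (Limit of the integral parameter for strong herding.) For s > 0 let μ(s) > 0 be the unique solution of the fixed-point equation (8) with parameter s. Then μ(s) converges as s → ∞, with limit lim_{s→∞} μ(s) = exp(((α/α̃ − 1)² − 1)·ν²·T/(2·σ²)). -/
/-- Limit of the integral parameter for strong herding. -/
theorem integral_parameter_limit_atTop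
    (ν σ T αl α : ℝ) (hν : 0 < ν) (hσ : 0 < σ) (hT : 0 < T)
    (hαl : 0 < αl) (hα : 0 < α)
    (μ : ℝ → ℝ)
    (hμ : ∀ s : ℝ, 0 < s → 0 < μ s ∧
      μ s = Real.exp (((α / αl - 1) ^ 2 * s ^ 2 / (α * σ ^ 2 * μ s + s) ^ 2 - 1)
        * ν ^ 2 * T / (2 * σ ^ 2))) :
    Filter.Tendsto μ Filter.atTop
      (nhds (Real.exp (((α / αl - 1) ^ 2 - 1) * ν ^ 2 * T / (2 * σ ^ 2)))) := by
  set k := (α / αl - 1) ^ 2 with hk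
  have hk0 : 0 ≤ k := sq_nonneg _
  set c := ν ^ 2 * T / (2 * σ ^ 2) with hc
  have hc0 : 0 < c := by positivity
  set M := Real.exp ((k - 1) * c) with hM
  have hM0 : 0 < M := Real.exp_pos _
  set A := α * σ ^ 2 * M with hA
  have hA0 : 0 < A := by positivity
  have key : ∀ s : ℝ, 0 < s →
      μ s = Real.exp ((k * s ^ 2 / (α * σ ^ 2 * μ s + s) ^ 2 - 1) * c) := by
    intro s hs
    conv_lhs => rw [(hμ s hs).2]
    congr 1
    rw [hc]; ring
  have hub : ∀ s : ℝ, 0 < s → μ s ≤ M := by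
    intro s hs
    obtain ⟨hpos, _⟩ := hμ s hs
    have hden : 0 < α * σ ^ 2 * μ s + s := by positivity
    rw [key s hs, hM]
    apply Real.exp_le_exp.mpr
    apply mul_le_mul_of_nonneg_right _ hc0.le
    have hfrac : s ^ 2 / (α * σ ^ 2 * μ s + s) ^ 2 ≤ 1 := by
      rw [div_le_one (by positivity)]
      have hle : s ≤ α * σ ^ 2 * μ s + s := by nlinarith
      exact pow_le_pow_left₀ hs.le hle 2
    have h2 : k * (s ^ 2 / (α * σ ^ 2 * μ s + s) ^ 2) ≤ k * 1 :=
      mul_le_mul_of_nonneg_left hfrac hk0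
    rw [mul_div_assoc]
    linarith
  have hlb : ∀ s : ℝ, 0 < s →
      Real.exp ((k * s ^ 2 / (A + s) ^ 2 - 1) * c) ≤ μ s := by
    intro s hs
    obtain ⟨hpos, _⟩ := hμ s hs
    have hden : 0 < α * σ ^ 2 * μ s + s := by positivity
    rw [key s hs]
    apply Real.exp_le_exp.mpr
    apply mul_le_mul_of_nonneg_right _ hc0.le
    have h1 : α * σ ^ 2 * μ s + s ≤ A + s := by
      have := hub s hs
      rw [hA]; nlinarith
    have hfrac : s ^ 2 / (A + s) ^ 2 ≤ s ^ 2 / (α * σ ^ 2 * μ s + s) ^ 2 :=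
      div_le_div_of_nonneg_left (by positivity) (by positivity)
        (pow_le_pow_left₀ hden.le h1 2)
    have h2 : k * (s ^ 2 / (A + s) ^ 2) ≤ k * (s ^ 2 / (α * σ ^ 2 * μ s + s) ^ 2) :=
      mul_le_mul_of_nonneg_left hfrac hk0
    rw [mul_div_assoc, mul_div_assoc]
    linarith
  have hg : Filter.Tendsto (fun s => Real.exp ((k * s ^ 2 / (A + s) ^ 2 - 1) * c))
      Filter.atTop (nhds M) := by
    rw [hM]
    apply (Real.continuous_exp.tendsto _).comp
    have h0 : Filter.Tendsto (fun s : ℝ => A / s) Filter.atTop (nhds 0) :=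
      tendsto_const_nhds.div_atTop Filter.tendsto_id
    have h1 : Filter.Tendsto (fun s : ℝ => ((A / s + 1)⁻¹) ^ 2) Filter.atTop (nhds 1) := by
      have ha : Filter.Tendsto (fun s : ℝ => A / s + 1) Filter.atTop (nhds 1) := by
        simpa using h0.add tendsto_const_nhds
      have := (ha.inv₀ one_ne_zero).pow 2
      simpa using this
    have h2 : Filter.Tendsto (fun s : ℝ => (k * ((A / s + 1)⁻¹) ^ 2 - 1) * c)
        Filter.atTop (nhds ((k - 1) * c)) := by
      have := ((h1.const_mul k).sub_const 1).mul_const c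
      simpa using this
    apply h2.congr'
    filter_upwards [Filter.eventually_gt_atTop 0] with s hs
    have hs0 : s ≠ 0 := hs.ne'
    have hAs : A + s ≠ 0 := by positivity
    have hinv : (A / s + 1)⁻¹ = s / (A + s) := by
      rw [inv_eq_iff_eq_inv, inv_div]
      field_simp
    rw [hinv, div_pow, mul_div_assoc]
  have htarget : ((k - 1) * ν ^ 2 * T / (2 * σ ^ 2)) = (k - 1) * c := by
    rw [hc]; ring
  rw [htarget, ← hM]
  refine tendsto_of_tendsto_of_tendsto_of_le_of_le' hg tendsto_const_nhds ?_ ?_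
  · filter_upwards [Filter.eventually_gt_atTop 0] with s hs using hlb s hs
  · filter_upwards [Filter.eventually_gt_atTop 0] with s hs using hub s hs
end

section
/- (The follower's decision converges to the leader's as herding grows.) For s > 0 let μ(s) > 0 be the unique solution of the fixed-point equation (8) with parameter s. Then the proportionality factor of the follower's optimal response relative to the leader's decision converges to 1: lim_{s→∞} (α̃·σ²·μ(s) + s)/(α·σ²·μ(s) + s) = 1. -/
/-- The follower's decision converges to the leader's as herding grows. -/
theorem proportionality_factor_tendsto_one
    (ν σ T αl α : ℝ) (hν : 0 < ν) (hσ : 0 < σ) (hT : 0 < T)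
    (hαl : 0 < αl) (hα : 0 < α)
    (μ : ℝ → ℝ)
    (hμ : ∀ s : ℝ, 0 < s → 0 < μ s ∧
      μ s = Real.exp (((α / αl - 1) ^ 2 * s ^ 2 / (α * σ ^ 2 * μ s + s) ^ 2 - 1)
        * ν ^ 2 * T / (2 * σ ^ 2))) :
    Filter.Tendsto (fun s : ℝ => (αl * σ ^ 2 * μ s + s) / (α * σ ^ 2 * μ s + s))
      Filter.atTop (nhds 1) := by
  set C : ℝ := Real.exp ((α / αl - 1) ^ 2 * ν ^ 2 * T / (2 * σ ^ 2)) with hCdef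
  have hCpos : 0 < C := Real.exp_pos _
  -- uniform bound on μ
  have hbound : ∀ s : ℝ, 0 < s → μ s ≤ C := by
    intro s hs
    obtain ⟨hpos, heq⟩ := hμ s hs
    rw [heq, hCdef]
    apply Real.exp_le_exp.mpr
    have hden : 0 < α * σ ^ 2 * μ s + s := by positivity
    have hX : s ^ 2 / (α * σ ^ 2 * μ s + s) ^ 2 ≤ 1 := by
      rw [div_le_one (by positivity)]
      nlinarith [sq_nonneg (α * σ ^ 2 * μ s), mul_pos (mul_pos hα (by positivity : (0:ℝ) < σ^2)) hpos]
    have h1 : (α / αl - 1) ^ 2 * s ^ 2 / (α * σ ^ 2 * μ s + s) ^ 2 - 1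
        ≤ (α / αl - 1) ^ 2 := by
      have h2 : (α / αl - 1) ^ 2 * (s ^ 2 / (α * σ ^ 2 * μ s + s) ^ 2)
          ≤ (α / αl - 1) ^ 2 * 1 := by
        apply mul_le_mul_of_nonneg_left hX (by positivity)
      have h3 : (α / αl - 1) ^ 2 * s ^ 2 / (α * σ ^ 2 * μ s + s) ^ 2
          = (α / αl - 1) ^ 2 * (s ^ 2 / (α * σ ^ 2 * μ s + s) ^ 2) := by ring
      linarith [h3 ▸ h2]
    have hpos2 : (0:ℝ) < ν ^ 2 * T / (2 * σ ^ 2) := by positivity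
    calc ((α / αl - 1) ^ 2 * s ^ 2 / (α * σ ^ 2 * μ s + s) ^ 2 - 1) * ν ^ 2 * T / (2 * σ ^ 2)
        = ((α / αl - 1) ^ 2 * s ^ 2 / (α * σ ^ 2 * μ s + s) ^ 2 - 1) * (ν ^ 2 * T / (2 * σ ^ 2)) := by
          ring
      _ ≤ (α / αl - 1) ^ 2 * (ν ^ 2 * T / (2 * σ ^ 2)) :=
          mul_le_mul_of_nonneg_right h1 (le_of_lt hpos2)
      _ = (α / αl - 1) ^ 2 * ν ^ 2 * T / (2 * σ ^ 2) := by ring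
  -- the difference tends to 0
  have hdiff : Filter.Tendsto
      (fun s : ℝ => (αl * σ ^ 2 * μ s + s) / (α * σ ^ 2 * μ s + s) - 1)
      Filter.atTop (nhds 0) := by
    refine squeeze_zero_norm' (a := fun s : ℝ => |αl - α| * σ ^ 2 * C / s) ?_ ?_
    · filter_upwards [Filter.eventually_gt_atTop (0:ℝ)] with s hs
      obtain ⟨hpos, _⟩ := hμ s hs
      have hden : 0 < α * σ ^ 2 * μ s + s := by positivity
      have heq : (αl * σ ^ 2 * μ s + s) / (α * σ ^ 2 * μ s + s) - 1
          = ((αl - α) * σ ^ 2 * μ s) / (α * σ ^ 2 * μ s + s) := by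
        field_simp
        ring
      rw [Real.norm_eq_abs, heq, abs_div, abs_of_pos hden]
      apply div_le_div₀ (by positivity)
      · calc |(αl - α) * σ ^ 2 * μ s| = |αl - α| * σ ^ 2 * μ s := by
              rw [abs_mul, abs_mul, abs_of_nonneg (by positivity : (0:ℝ) ≤ σ^2),
                abs_of_pos hpos]
        _ ≤ |αl - α| * σ ^ 2 * C := by
              apply mul_le_mul_of_nonneg_left (hbound s hs) (by positivity)
      · exact hs
      · nlinarith [mul_pos (mul_pos hα (by positivity : (0:ℝ) < σ^2)) hpos]
    · have : Filter.Tendsto (fun s : ℝ => |αl - α| * σ ^ 2 * C / s)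
          Filter.atTop (nhds 0) :=
        Filter.Tendsto.div_atTop tendsto_const_nhds Filter.tendsto_id
      exact this
  have := hdiff.add (tendsto_const_nhds (x := (1:ℝ)))
  simpa using this
end

section
/- (Continuity of the integral parameter.) For s ≥ 0 let μ(s) > 0 be the unique solution of the fixed-point equation (8) with parameter s. Then the function s ↦ μ(s) is continuous on [0, ∞), and μ(0) = exp(−ν²·T/(2·σ²)). -/
/-- Continuity of the integral parameter on [0, ∞), and its value at 0. -/
theorem integral_parameter_continuous
    (ν σ T αl α : ℝ) (hν : 0 < ν) (hσ : 0 < σ) (hT : 0 < T)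
    (hαl : 0 < αl) (hα : 0 < α)
    (μ : ℝ → ℝ)
    (hμ : ∀ s : ℝ, 0 ≤ s → 0 < μ s ∧
      μ s = Real.exp (((α / αl - 1) ^ 2 * s ^ 2 / (α * σ ^ 2 * μ s + s) ^ 2 - 1)
        * ν ^ 2 * T / (2 * σ ^ 2))) :
    ContinuousOn μ (Set.Ici 0) ∧ μ 0 = Real.exp (-(ν ^ 2 * T) / (2 * σ ^ 2)) := by
  set c := (α / αl - 1) ^ 2 with hcdef
  have hc0 : 0 ≤ c := sq_nonneg _
  set G : ℝ → ℝ → ℝ := fun s m =>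
    Real.exp ((c * s ^ 2 / (α * σ ^ 2 * m + s) ^ 2 - 1) * ν ^ 2 * T / (2 * σ ^ 2)) with hGdef
  have hfix : ∀ s, 0 ≤ s → μ s = G s (μ s) := fun s hs => (hμ s hs).2
  have hpos : ∀ s, 0 ≤ s → 0 < μ s := fun s hs => (hμ s hs).1
  -- antitonicity of G in m
  have hanti : ∀ s, 0 ≤ s → ∀ m1 m2 : ℝ, 0 < m1 → m1 ≤ m2 → G s m2 ≤ G s m1 := by
    intro s hs m1 m2 h1 h12
    have hd1 : 0 < α * σ ^ 2 * m1 + s :=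
      add_pos_of_pos_of_nonneg (mul_pos (by positivity) h1) hs
    have hd2 : 0 < α * σ ^ 2 * m2 + s :=
      add_pos_of_pos_of_nonneg (mul_pos (by positivity) (lt_of_lt_of_le h1 h12)) hs
    have hdd : α * σ ^ 2 * m1 + s ≤ α * σ ^ 2 * m2 + s := by
      have := mul_le_mul_of_nonneg_left h12 (le_of_lt (by positivity : (0:ℝ) < α * σ ^ 2))
      linarith
    have key : c * s ^ 2 / (α * σ ^ 2 * m2 + s) ^ 2 ≤ c * s ^ 2 / (α * σ ^ 2 * m1 + s) ^ 2 := by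
      apply div_le_div_of_nonneg_left (mul_nonneg hc0 (sq_nonneg s)) (pow_pos hd1 2)
      exact pow_le_pow_left₀ hd1.le hdd 2
    apply Real.exp_le_exp.2
    have hνT : (0:ℝ) ≤ ν ^ 2 * T := by positivity
    have h2σ : (0:ℝ) < 2 * σ ^ 2 := by positivity
    apply (div_le_div_iff_of_pos_right h2σ).2
    nlinarith [mul_le_mul_of_nonneg_right (sub_le_sub_right key (1:ℝ)) hνT]
  -- comparison lemmas
  have hub : ∀ s, 0 ≤ s → ∀ m : ℝ, 0 < m → G s m < m → μ s < m := by
    intro s hs m hm hlt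
    by_contra h
    push_neg at h
    have h2 := hanti s hs m (μ s) hm h
    rw [← hfix s hs] at h2
    linarith
  have hlb : ∀ s, 0 ≤ s → ∀ m : ℝ, 0 < m → m < G s m → m < μ s := by
    intro s hs m hm hlt
    by_contra h
    push_neg at h
    have h2 := hanti s hs (μ s) m (hpos s hs) h
    rw [← hfix s hs] at h2
    linarith
  -- continuity of G in s for fixed m
  have hGc : ∀ m : ℝ, 0 < m → ∀ s₀ : ℝ, 0 ≤ s₀ → ContinuousAt (fun s => G s m) s₀ := by
    intro m hm s₀ hs₀
    have hd : (α * σ ^ 2 * m + s₀) ≠ 0 :=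
      ne_of_gt (add_pos_of_pos_of_nonneg (by positivity) hs₀)
    apply Real.continuous_exp.continuousAt.comp
    apply ContinuousAt.div _ continuousAt_const (by positivity)
    apply ContinuousAt.mul (ContinuousAt.mul _ continuousAt_const) continuousAt_const
    apply ContinuousAt.sub _ continuousAt_const
    apply ContinuousAt.div
    · exact continuousAt_const.mul ((continuous_pow 2).continuousAt)
    · exact ((continuous_const.add continuous_id).pow 2).continuousAt
    · exact pow_ne_zero 2 hd
  constructor
  · intro s₀ hs₀
    have hs₀' : (0:ℝ) ≤ s₀ := hs₀
    rw [Metric.continuousWithinAt_iff]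
    intro ε hε
    have hμ0 := hpos s₀ hs₀'
    set ε' := min ε (μ s₀ / 2) with hε'def
    have hε' : 0 < ε' := lt_min hε (by positivity)
    have hε'le : ε' ≤ ε := min_le_left _ _
    have hε'le2 : ε' ≤ μ s₀ / 2 := min_le_right _ _
    have hmlo : 0 < μ s₀ - ε' := by linarith
    have hmhi : 0 < μ s₀ + ε' := by linarith
    have h1 : G s₀ (μ s₀ + ε') < μ s₀ + ε' := by
      have := hanti s₀ hs₀' (μ s₀) (μ s₀ + ε') hμ0 (by linarith)
      rw [← hfix s₀ hs₀'] at this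
      linarith
    have h2 : μ s₀ - ε' < G s₀ (μ s₀ - ε') := by
      have := hanti s₀ hs₀' (μ s₀ - ε') (μ s₀) hmlo (by linarith)
      rw [← hfix s₀ hs₀'] at this
      linarith
    have e1 : ∀ᶠ s in nhds s₀, G s (μ s₀ + ε') < μ s₀ + ε' :=
      (hGc _ hmhi s₀ hs₀').eventually_lt continuousAt_const h1
    have e2 : ∀ᶠ s in nhds s₀, μ s₀ - ε' < G s (μ s₀ - ε') :=
      continuousAt_const.eventually_lt (hGc _ hmlo s₀ hs₀') h2
    obtain ⟨δ, hδ, hball⟩ := Metric.eventually_nhds_iff.1 (e1.and e2)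
    refine ⟨δ, hδ, ?_⟩
    intro s hsmem hdist
    have hs : (0:ℝ) ≤ s := hsmem
    obtain ⟨ha, hb⟩ := hball hdist
    have h3 := hub s hs _ hmhi ha
    have h4 := hlb s hs _ hmlo hb
    rw [Real.dist_eq, abs_lt]
    constructor <;> linarith
  · have h := (hμ 0 le_rfl).2
    have hz : ((α / αl - 1) ^ 2 * (0:ℝ) ^ 2 / (α * σ ^ 2 * μ 0 + 0) ^ 2 - 1)
        * ν ^ 2 * T / (2 * σ ^ 2) = -(ν ^ 2 * T) / (2 * σ ^ 2) := by
      rw [show ((0:ℝ) ^ 2 = 0) by norm_num, mul_zero, zero_div]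
      ring
    rw [h, hz]
end
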